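/- Let 0 < α ≤ β < 1. Then there is a function e(ρ) with e(ρ) = o(ρ) as ρ → 0⁺ such that for all small ρ > 0: 2 − log(1−ρ) − max over d ∈ [h⁻¹(β)−h⁻¹(α), h⁻¹(β)+h⁻¹(α)] of ( w_d(α,β) + d·log((1+ρ)/(1−ρ)) ) ≥ (1−α) + (1−β) + ρ·log(e)·(1 − 2·(h⁻¹(α) * h⁻¹(β))) + e(ρ). -/

import Mathlib

set_option maxHeartbeats 1000000


open Finset Asymptotics Filter

/-- Binary entropy function (base-2 logarithms). -/
noncomputable def binEnt (p : ℝ) : ℝ :=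
  -(p * Real.logb 2 p) - (1 - p) * Real.logb 2 (1 - p)

/-- Inverse of the binary entropy function restricted to `[0, 1/2]`. -/
noncomputable def binEntInv (x : ℝ) : ℝ :=
  sSup {p : ℝ | p ∈ Set.Icc (0:ℝ) (1/2) ∧ binEnt p ≤ x}

/-- `p*q = p(1-q) + q(1-p)`. -/
def pstar (p q : ℝ) : ℝ := p * (1 - q) + q * (1 - p)

/-- Probability of the rectangle `A × B` for `ρ`-correlated uniform binary strings. -/
noncomputable def Pxy (n : ℕ) (ρ : ℝ) (A B : Finset (Fin n → Bool)) : ℝ :=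
  ∑ a ∈ A, ∑ b ∈ B,
    (2:ℝ)⁻¹ ^ n * ((1 + ρ)/2) ^ n * ((1 - ρ)/(1 + ρ)) ^ (hammingDist a b)

/-- Hamming sphere of radius `j` around the all-zeros string in `{0,1}^n`. -/
def hSphere (n j : ℕ) : Finset (Fin n → Bool) :=
  Finset.univ.filter (fun x => (Finset.univ.filter (fun i => x i = true)).card = j)

/-- The exponent function `w_d(α,β)`. -/
noncomputable def wd (α β d : ℝ) : ℝ :=
  α + binEntInv α * binEnt (1/2 + (binEntInv β - d)/(2 * binEntInv α))
    + (1 - binEntInv α) * binEnt (1/2 + (d - (1 - binEntInv β))/(2 * (1 - binEntInv α)))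

/-- The noise operator `T_ρ`. -/
noncomputable def Tnoise (n : ℕ) (ρ : ℝ) (f : (Fin n → Bool) → ℝ) (y : Fin n → Bool) : ℝ :=
  ∑ x : Fin n → Bool,
    f x * ((1 + ρ)/2) ^ (n - hammingDist x y) * ((1 - ρ)/2) ^ (hammingDist x y)

/-- The normalized `p`-norm on functions on the hypercube. -/
noncomputable def pNorm (n : ℕ) (p : ℝ) (f : (Fin n → Bool) → ℝ) : ℝ :=
  ((2:ℝ)⁻¹ ^ n * ∑ x : Fin n → Bool, |f x| ^ p) ^ (1/p)

/-- Indicator function of a set `A ⊆ {0,1}^n`. -/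
def indA (n : ℕ) (A : Finset (Fin n → Bool)) : (Fin n → Bool) → ℝ :=
  fun x => if x ∈ A then 1 else 0

private lemma binEnt_eq (p : ℝ) : binEnt p = Real.binEntropy p / Real.log 2 := by
  rw [binEnt, Real.binEntropy, Real.log_inv, Real.log_inv, Real.logb, Real.logb]
  ring

private lemma binEnt_cont : Continuous binEnt := by
  have : binEnt = fun p => Real.binEntropy p / Real.log 2 := funext binEnt_eq
  rw [this]; exact Real.binEntropy_continuous.div_const _

private lemma strongConcave :
    ConcaveOn ℝ (Set.Icc (0:ℝ) 1) (fun p => Real.binEntropy p + 2 * p ^ 2) := by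
  apply concaveOn_of_hasDerivWithinAt2_nonpos (convex_Icc 0 1)
    (f' := fun p => Real.log (1 - p) - Real.log p + 4 * p)
    (f'' := fun p => -(1/(1 - p)) - 1/p + 4)
  · exact (Real.binEntropy_continuous.add (by continuity)).continuousOn
  · intro x hx
    rw [interior_Icc] at hx
    have h1 : HasDerivAt Real.binEntropy (Real.log (1-x) - Real.log x) x :=
      Real.hasDerivAt_binEntropy (ne_of_gt hx.1) (ne_of_lt hx.2)
    have h2 : HasDerivAt (fun p : ℝ => 2 * p ^ 2) (4 * x) x := by
      have := (hasDerivAt_pow 2 x).const_mul (2:ℝ)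
      exact this.congr_deriv (by push_cast; ring)
    exact (h1.add h2).hasDerivWithinAt
  · intro x hx
    rw [interior_Icc] at hx
    have hx0 : x ≠ 0 := ne_of_gt hx.1
    have hx1 : (1:ℝ) - x ≠ 0 := by have := hx.2; intro h; linarith [sub_eq_zero.mp h]
    have h1 : HasDerivAt (fun p : ℝ => Real.log (1 - p)) (-(1/(1-x))) x := by
      have := (Real.hasDerivAt_log hx1).comp x ((hasDerivAt_id x).const_sub (1:ℝ))
      exact this.congr_deriv (by ring)
    have h2 : HasDerivAt (fun p : ℝ => Real.log p) (1/x) x := by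
      simpa [one_div] using Real.hasDerivAt_log hx0
    have h3 : HasDerivAt (fun p : ℝ => 4 * p) 4 x := by
      simpa using (hasDerivAt_id x).const_mul (4:ℝ)
    exact ((h1.sub h2).add h3).hasDerivWithinAt
  · intro x hx
    rw [interior_Icc] at hx
    have hx0 : 0 < x := hx.1
    have hx1 : 0 < 1 - x := by linarith [hx.2]
    have key : 4 ≤ 1/(x*(1-x)) := by
      rw [le_div_iff₀ (by positivity)]
      nlinarith [sq_nonneg (2*x-1)]
    have expand : 1/(x*(1-x)) = 1/x + 1/(1-x) := by field_simp; ring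
    linarith

private lemma sc2 {x y l : ℝ} (hx0 : 0 ≤ x) (hx1 : x ≤ 1) (hy0 : 0 ≤ y) (hy1 : y ≤ 1)
    (hl0 : 0 ≤ l) (hl1 : l ≤ 1) :
    l * binEnt x + (1 - l) * binEnt y + 2 / Real.log 2 * (l * (1 - l) * (x - y)^2)
      ≤ binEnt (l * x + (1 - l) * y) := by
  have hc : (0:ℝ) < Real.log 2 := Real.log_pos (by norm_num)
  have h : l • (Real.binEntropy x + 2 * x ^ 2) + (1 - l) • (Real.binEntropy y + 2 * y ^ 2)
      ≤ Real.binEntropy (l * x + (1 - l) * y) + 2 * (l * x + (1 - l) * y) ^ 2 :=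
    strongConcave.2 ⟨hx0, hx1⟩ ⟨hy0, hy1⟩ hl0 (by linarith) (by ring)
  simp only [smul_eq_mul] at h
  have key : l * Real.binEntropy x + (1 - l) * Real.binEntropy y + 2 * (l * (1 - l) * (x - y)^2)
      ≤ Real.binEntropy (l * x + (1 - l) * y) := by nlinarith [h]
  rw [binEnt_eq, binEnt_eq, binEnt_eq]
  have heq : l * (Real.binEntropy x / Real.log 2) + (1 - l) * (Real.binEntropy y / Real.log 2)
      + 2 / Real.log 2 * (l * (1 - l) * (x - y)^2)
      = (l * Real.binEntropy x + (1 - l) * Real.binEntropy y + 2 * (l * (1 - l) * (x - y)^2)) / Real.log 2 := by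
    ring
  rw [heq]
  gcongr

private lemma wd_le (α β a b d t : ℝ) (ha0 : 0 < a) (hab : a ≤ b) (hb2 : b ≤ 1/2)
    (hbE : binEnt b ≤ β) (hd : b - a ≤ d) (hd' : d ≤ b + a) (ht : 0 ≤ t)
    (hwd : wd α β d = α + a * binEnt (1/2 + (b - d)/(2*a))
      + (1-a) * binEnt (1/2 + (d - (1-b))/(2*(1-a)))) :
    wd α β d + d * t ≤ α + β + (a*(1-b)+b*(1-a)) * t + Real.log 2/8 * t^2 := by
  have hc : (0:ℝ) < Real.log 2 := Real.log_pos (by norm_num)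
  have hb0 : 0 < b := lt_of_lt_of_le ha0 hab
  have ha2 : a ≤ 1/2 := hab.trans hb2
  have h1a : 0 < 1 - a := by linarith
  have h2a : (0:ℝ) < 2*a := by linarith
  have h21a : (0:ℝ) < 2*(1-a) := by linarith
  have hu_eq : 1/2 + (b - d)/(2*a) = (a + (b - d))/(2*a) := by field_simp; try ring
  have hv_eq : 1/2 + (d - (1-b))/(2*(1-a)) = ((1-a) + (d - (1-b)))/(2*(1-a)) := by
    field_simp; try ring
  have hu0 : 0 ≤ 1/2 + (b - d)/(2*a) := by
    rw [hu_eq]; apply div_nonneg (by linarith) h2a.le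
  have hu1 : 1/2 + (b - d)/(2*a) ≤ 1 := by
    rw [hu_eq, div_le_one h2a]; linarith
  have hv0 : 0 ≤ 1/2 + (d - (1-b))/(2*(1-a)) := by
    rw [hv_eq]; apply div_nonneg (by linarith) h21a.le
  have hv1 : 1/2 + (d - (1-b))/(2*(1-a)) ≤ 1 := by
    rw [hv_eq, div_le_one h21a]; linarith
  have hsum : a * (1/2 + (b - d)/(2*a)) + (1-a) * (1/2 + (d - (1-b))/(2*(1-a))) = b := by
    field_simp; try ring
  have hsc := sc2 hu0 hu1 hv0 hv1 ha0.le (by linarith)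
  rw [hsum] at hsc
  have huv : (1/2 + (b - d)/(2*a)) - (1/2 + (d - (1-b))/(2*(1-a)))
      = -(d - (a*(1-b)+b*(1-a)))/(2*(a*(1-a))) := by
    field_simp; try ring
  have hm : 0 < a*(1-a) := mul_pos ha0 h1a
  have hm4 : 4*(a*(1-a)) ≤ 1 := by nlinarith [sq_nonneg (1-2*a)]
  have hq2 : (d - (a*(1-b)+b*(1-a)))^2
      ≤ a*(1-a) * ((1/2 + (b - d)/(2*a)) - (1/2 + (d - (1-b))/(2*(1-a))))^2 := by
    rw [huv]
    have : a*(1-a) * (-(d - (a*(1-b)+b*(1-a)))/(2*(a*(1-a))))^2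
        = (d - (a*(1-b)+b*(1-a)))^2/(4*(a*(1-a))) := by
      field_simp; try ring
    rw [this, le_div_iff₀ (by positivity)]
    nlinarith [sq_nonneg (d - (a*(1-b)+b*(1-a)))]
  have hmul : 2/Real.log 2 * (d - (a*(1-b)+b*(1-a)))^2
      ≤ 2/Real.log 2 * (a*(1-a) * ((1/2 + (b - d)/(2*a)) - (1/2 + (d - (1-b))/(2*(1-a))))^2) := by
    apply mul_le_mul_of_nonneg_left hq2 (by positivity)
  have hd_qt : (d - (a*(1-b)+b*(1-a))) * t
      ≤ 2/Real.log 2 * (d - (a*(1-b)+b*(1-a)))^2 + Real.log 2/8 * t^2 := by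
    rw [← mul_le_mul_iff_right₀ hc]
    have hX : Real.log 2 * (2/Real.log 2 * (d - (a*(1-b)+b*(1-a)))^2 + Real.log 2/8 * t^2)
        = 2*(d - (a*(1-b)+b*(1-a)))^2 + Real.log 2^2/8*t^2 := by
      field_simp
    rw [hX]
    nlinarith [sq_nonneg (2*(d - (a*(1-b)+b*(1-a))) - Real.log 2 * t/2)]
  rw [hwd]
  linarith [hsc, hbE, hmul, hd_qt]
private lemma binEnt_zero : binEnt 0 = 0 := by simp [binEnt]

private lemma binEntInv_facts {x : ℝ} (hx : 0 < x) :
    0 < binEntInv x ∧ binEntInv x ≤ 1/2 ∧ binEnt (binEntInv x) ≤ x := by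
  have hclosed : IsClosed {p : ℝ | p ∈ Set.Icc (0:ℝ) (1/2) ∧ binEnt p ≤ x} := by
    have h : {p : ℝ | p ∈ Set.Icc (0:ℝ) (1/2) ∧ binEnt p ≤ x}
        = Set.Icc (0:ℝ) (1/2) ∩ binEnt ⁻¹' Set.Iic x := rfl
    rw [h]; exact isClosed_Icc.inter (isClosed_Iic.preimage binEnt_cont)
  have hne : Set.Nonempty {p : ℝ | p ∈ Set.Icc (0:ℝ) (1/2) ∧ binEnt p ≤ x} :=
    ⟨0, ⟨by norm_num, by rw [binEnt_zero]; exact hx.le⟩⟩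
  have hbdd : BddAbove {p : ℝ | p ∈ Set.Icc (0:ℝ) (1/2) ∧ binEnt p ≤ x} :=
    ⟨1/2, fun p hp => hp.1.2⟩
  have hmem := hclosed.csSup_mem hne hbdd
  refine ⟨?_, hmem.1.2, hmem.2⟩
  have h0 : Tendsto binEnt (nhdsWithin 0 (Set.Ioi 0)) (nhds 0) := by
    have h1 : Tendsto binEnt (nhds 0) (nhds (binEnt 0)) := binEnt_cont.continuousAt
    rw [binEnt_zero] at h1
    exact h1.mono_left nhdsWithin_le_nhds
  have hev1 : ∀ᶠ p in nhdsWithin (0:ℝ) (Set.Ioi 0), binEnt p < x := h0.eventually_lt_const hx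
  have hev2 : ∀ᶠ p in nhdsWithin (0:ℝ) (Set.Ioi 0), p < 1/2 :=
    eventually_nhdsWithin_of_eventually_nhds
      (by filter_upwards [Iio_mem_nhds (show (0:ℝ) < 1/2 by norm_num)] with p hp using hp)
  have hev3 : ∀ᶠ p in nhdsWithin (0:ℝ) (Set.Ioi 0), p ∈ Set.Ioi (0:ℝ) :=
    eventually_mem_nhdsWithin
  obtain ⟨p, hp1, hp2, hp3⟩ := (hev1.and (hev2.and hev3)).exists
  have hle : p ≤ binEntInv x := le_csSup hbdd ⟨⟨(le_of_lt hp3), hp2.le⟩, hp1.le⟩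
  exact lt_of_lt_of_le hp3 hle

/-- lower bound for the anti-concentric spherical exponent as `ρ → 0⁺`. -/
theorem stmt_5 (α β : ℝ) (hα : 0 < α) (hαβ : α ≤ β) (hβ : β < 1) :
    ∃ e : ℝ → ℝ, (e =o[nhdsWithin 0 (Set.Ioi 0)] fun ρ : ℝ => ρ) ∧
      ∃ δ : ℝ, 0 < δ ∧ ∀ ρ ∈ Set.Ioo (0:ℝ) δ,
        2 - Real.logb 2 (1 - ρ)
          - sSup ((fun d : ℝ => wd α β d + d * Real.logb 2 ((1 + ρ)/(1 - ρ))) ''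
              Set.Icc (binEntInv β - binEntInv α) (binEntInv β + binEntInv α))
        ≥ (1 - α) + (1 - β)
          + ρ * Real.logb 2 (Real.exp 1) * (1 - 2 * pstar (binEntInv α) (binEntInv β))
          + e ρ := by
  have hc : (0:ℝ) < Real.log 2 := Real.log_pos (by norm_num)
  obtain ⟨ha0, ha2, haE⟩ := binEntInv_facts hα
  have hβ0 : 0 < β := lt_of_lt_of_le hα hαβ
  obtain ⟨hb0, hb2, hbE⟩ := binEntInv_facts hβ0
  have hab : binEntInv α ≤ binEntInv β := by
    have hne' : Set.Nonempty {p : ℝ | p ∈ Set.Icc (0:ℝ) (1/2) ∧ binEnt p ≤ α} :=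
      ⟨0, ⟨by norm_num, by rw [binEnt_zero]; exact hα.le⟩⟩
    have hbdd' : BddAbove {p : ℝ | p ∈ Set.Icc (0:ℝ) (1/2) ∧ binEnt p ≤ β} :=
      ⟨1/2, fun p hp => hp.1.2⟩
    exact csSup_le_csSup hbdd' hne' (fun p hp => ⟨hp.1, hp.2.trans hαβ⟩)
  set a := binEntInv α with ha_def
  set b := binEntInv β with hb_def
  refine ⟨fun ρ => -(2/Real.log 2 * ρ^2), ?_, 1/2, by norm_num, ?_⟩
  · have h1 : (fun ρ:ℝ => ρ^2) =o[nhds 0] (fun ρ:ℝ => ρ) := isLittleO_pow_id one_lt_two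
    exact ((h1.const_mul_left (2/Real.log 2)).neg_left).mono nhdsWithin_le_nhds
  · intro ρ hρ
    obtain ⟨hρ0, hρδ⟩ := hρ
    have h1ρ : 0 < 1 - ρ := by linarith
    have h1ρ' : 0 < 1 + ρ := by linarith
    set t := Real.logb 2 ((1 + ρ)/(1 - ρ)) with ht_def
    have hd0 : 0 ≤ pstar a b := by
      have h : pstar a b = a*(1-b)+b*(1-a) := rfl
      rw [h]
      nlinarith [mul_nonneg ha0.le (by linarith : (0:ℝ) ≤ 1-b),
        mul_nonneg hb0.le (by linarith : (0:ℝ) ≤ 1-a)]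
    have hd1 : pstar a b ≤ 1 := by
      have h : pstar a b = a*(1-b)+b*(1-a) := rfl
      rw [h]
      nlinarith [mul_nonneg (by linarith : (0:ℝ) ≤ 1-a) (by linarith : (0:ℝ) ≤ 1-b),
        mul_nonneg ha0.le hb0.le]
    have hA : ρ ≤ -Real.log (1-ρ) := by nlinarith [Real.log_le_sub_one_of_pos h1ρ]
    have hA2 : -Real.log (1-ρ) ≤ 2*ρ := by
      have h3 := Real.log_le_sub_one_of_pos (inv_pos.mpr h1ρ)
      rw [Real.log_inv] at h3
      have h4 : (1-ρ)⁻¹ ≤ 1 + 2*ρ := by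
        rw [inv_eq_one_div, div_le_iff₀ h1ρ]; nlinarith
      linarith
    have hB0 : 0 ≤ Real.log (1+ρ) := Real.log_nonneg (by linarith)
    have hBρ : Real.log (1+ρ) ≤ ρ := by nlinarith [Real.log_le_sub_one_of_pos h1ρ']
    have ht_eq : t = (Real.log (1+ρ) + -Real.log (1-ρ))/Real.log 2 := by
      rw [ht_def, Real.logb, Real.log_div h1ρ'.ne' h1ρ.ne']; ring
    have ht0 : 0 ≤ t := by
      rw [ht_eq]; apply div_nonneg (by linarith) hc.le
    have hS : sSup ((fun d : ℝ => wd α β d + d * t) '' Set.Icc (b - a) (b + a))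
        ≤ α + β + pstar a b * t + Real.log 2/8 * t^2 := by
      apply Real.sSup_le
      · rintro y ⟨d, hdmem, rfl⟩
        have h := wd_le α β a b d t ha0 hab hb2 hbE
          (by linarith [hdmem.1]) (by linarith [hdmem.2]) ht0 rfl
        simpa [pstar] using h
      · have h1 := mul_nonneg hd0 ht0
        have h2 := mul_nonneg (by positivity : (0:ℝ) ≤ Real.log 2/8) (sq_nonneg t)
        linarith
    have hL : Real.logb 2 (Real.exp 1) = 1/Real.log 2 := by rw [Real.logb, Real.log_exp]
    have hlb : Real.logb 2 (1-ρ) = -(-Real.log (1-ρ))/Real.log 2 := by rw [Real.logb]; ring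
    rw [hL, hlb]
    set A := -Real.log (1-ρ) with hA_def
    set B := Real.log (1+ρ) with hB_def
    have key : pstar a b * (A + B - 2*ρ) + (A+B)^2/8 ≤ A - ρ + 2*ρ^2 := by
      nlinarith [mul_nonneg (sub_nonneg.2 hd1) (sub_nonneg.2 hA),
        mul_nonneg hd0 (sub_nonneg.2 hBρ),
        mul_nonneg (by linarith : (0:ℝ) ≤ 3*ρ - (A+B)) (by linarith : (0:ℝ) ≤ 3*ρ + (A+B)),
        sq_nonneg ρ]
    have key2 : (pstar a b * (A + B - 2*ρ) + (A+B)^2/8)/Real.log 2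
        ≤ (A - ρ + 2*ρ^2)/Real.log 2 := by
      rw [div_le_div_iff₀ hc hc]
      exact mul_le_mul_of_nonneg_right key hc.le
    have hS2 : sSup ((fun d : ℝ => wd α β d + d * t) '' Set.Icc (b - a) (b + a))
        ≤ α + β + pstar a b * ((B + A)/Real.log 2)
          + Real.log 2/8 * ((B + A)/Real.log 2)^2 := by
      rw [← ht_eq]; exact hS
    have hq_eq : Real.log 2/8 * ((B + A)/Real.log 2)^2 = ((B + A)^2/8)/Real.log 2 := by
      field_simp
    have hp_eq : pstar a b * ((B + A)/Real.log 2) = (pstar a b * (B + A))/Real.log 2 := by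
      ring
    rw [hq_eq, hp_eq] at hS2
    set SS := sSup ((fun d : ℝ => wd α β d + d * t) '' Set.Icc (b - a) (b + a)) with hSS_def
    have hfin : (1 - α) + (1 - β) + ρ * (1/Real.log 2) * (1 - 2 * pstar a b)
        + -(2/Real.log 2 * ρ^2) ≤ 2 - -A/Real.log 2 - SS := by
      rw [← sub_nonneg]
      have hrew : 2 - -A/Real.log 2 - SS - ((1 - α) + (1 - β)
            + ρ * (1/Real.log 2) * (1 - 2 * pstar a b) + -(2/Real.log 2 * ρ^2))
          = (A - ρ + 2*ρ^2 - (pstar a b * (A+B-2*ρ) + (A+B)^2/8))/Real.log 2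
            + ((α + β + pstar a b * (B + A) / Real.log 2 + (B + A)^2/8/Real.log 2) - SS) := by
        ring
      rw [hrew]
      exact add_nonneg (div_nonneg (by linarith [key]) hc.le) (by linarith [hS2])
    exact hfin
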